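/- For every graph G, every vertex v, and every parameter r ∈ ℕ, every eulerian subgraph (element of the cycle space over 𝔽₂) of the ball B_{r/2}(v) is a sum over 𝔽₂ of edge sets of cycles of length at most r contained in B_{r/2}(v). -/

import Mathlib

open SimpleGraph

universe u

namespace LocalSep

variable {V : Type u}

/-- The ball of radius `r/2` around `v`: vertices of distance at most `⌊r/2⌋` from `v`;
if `r` is even, edges joining two vertices of distance exactly `r/2` are removed. -/
def ballVerts (G : SimpleGraph V) (v : V) (r : ℕ) : Set V :=
  {u | G.Reachable v u ∧ G.dist v u ≤ r / 2}

def ball (G : SimpleGraph V) (v : V) (r : ℕ) : G.Subgraph where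
  verts := ballVerts G v r
  Adj u u' := G.Adj u u' ∧ u ∈ ballVerts G v r ∧ u' ∈ ballVerts G v r ∧
    (Even r → ¬(G.dist v u = r / 2 ∧ G.dist v u' = r / 2))
  adj_sub h := h.1
  edge_vert h := h.2.1
  symm := ⟨fun u u' h => ⟨h.1.symm, h.2.2.1, h.2.1, fun he hc => h.2.2.2 he ⟨hc.2, hc.1⟩⟩⟩

/-- `v` is an `r`-local cutvertex if the punctured ball `B_{r/2}(v) - v` is disconnected. -/
def IsLocalCutvertex (G : SimpleGraph V) (r : ℕ) (v : V) : Prop :=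
  ¬ ((ball G v r).deleteVerts {v}).coe.Connected

def HasShortCycle (G : SimpleGraph V) (r : ℕ) : Prop :=
  ∃ (u : V) (c : G.Walk u u), c.IsCycle ∧ c.length ≤ r

/-- A connected graph is `r`-locally 2-connected if it has no `r`-local cutvertex
and contains a cycle of length at most `r`. -/
def LocallyTwoConnected (G : SimpleGraph V) (r : ℕ) : Prop :=
  G.Connected ∧ (∀ v : V, ¬ IsLocalCutvertex G r v) ∧ HasShortCycle G r

/-- The core of `(a₁, a₂)`: all vertices on shortest `a₁`–`a₂` paths. -/
def core (G : SimpleGraph V) (a₁ a₂ : V) : Set V :=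
  {x | ∃ p : G.Walk a₁ a₂, p.IsPath ∧ p.length = G.dist a₁ a₂ ∧ x ∈ p.support}

/-- A walk is contained in a subgraph. -/
def WalkIn {G : SimpleGraph V} (B : G.Subgraph) {x y : V} (p : G.Walk x y) : Prop :=
  p.toSubgraph ≤ B

/-- The label of a vertex `u` in a ball `B`: the set of (supports of) shortest paths
from the core `C` to `u` contained in `B`. -/
def labelIn (G : SimpleGraph V) (B : G.Subgraph) (C : Set V) (u : V) : Set (List V) :=
  {l | ∃ c ∈ C, ∃ p : G.Walk c u, p.IsPath ∧ WalkIn B p ∧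
    (∀ c' ∈ C, ∀ q : G.Walk c' u, q.IsPath → WalkIn B q → p.length ≤ q.length) ∧
    l = p.support}

/-- A potential vertex of the explorer-neighbourhood: a vertex together with a label. -/
abbrev EVert (V : Type u) : Type u := V × Set (List V)

/-- `p` is the copy of the vertex `p.1` in the labelled ball around `a ∈ {a₁, a₂}`. -/
def inCopy (G : SimpleGraph V) (a₁ a₂ : V) (r : ℕ) (a : V) (p : EVert V) : Prop :=
  p.1 ∈ ballVerts G a r ∧ p.2 = labelIn G (ball G a r) (core G a₁ a₂) p.1

/-- Vertices of the explorer-neighbourhood `Expl(a₁,a₂)`. -/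
def explVerts (G : SimpleGraph V) (a₁ a₂ : V) (r : ℕ) : Set (EVert V) :=
  {p | inCopy G a₁ a₂ r a₁ p ∨ inCopy G a₁ a₂ r a₂ p}

/-- The explorer-neighbourhood `Expl(a₁,a₂)`: the union of the two labelled balls,
where two copies of a vertex are identified iff their labels agree. -/
def expl (G : SimpleGraph V) (a₁ a₂ : V) (r : ℕ) : SimpleGraph (EVert V) where
  Adj p q :=
    (inCopy G a₁ a₂ r a₁ p ∧ inCopy G a₁ a₂ r a₁ q ∧ (ball G a₁ r).Adj p.1 q.1) ∨
    (inCopy G a₁ a₂ r a₂ p ∧ inCopy G a₁ a₂ r a₂ q ∧ (ball G a₂ r).Adj p.1 q.1)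
  symm := by
    constructor
    intro p q h
    rcases h with ⟨h1, h2, h3⟩ | ⟨h1, h2, h3⟩
    · exact Or.inl ⟨h2, h1, h3.symm⟩
    · exact Or.inr ⟨h2, h1, h3.symm⟩
  loopless := by
    constructor
    intro p h
    rcases h with ⟨-, -, h⟩ | ⟨-, -, h⟩ <;> exact G.loopless.irrefl _ h.adj_sub

/-- Vertices of the punctured explorer-neighbourhood `Expl(a₁,a₂) - a₁ - a₂`. -/
def pexplVerts (G : SimpleGraph V) (a₁ a₂ : V) (r : ℕ) : Set (EVert V) :=
  {p | p ∈ explVerts G a₁ a₂ r ∧ p.1 ≠ a₁ ∧ p.1 ≠ a₂}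

/-- The punctured explorer-neighbourhood `Expl(a₁,a₂) - a₁ - a₂`. -/
def pexpl (G : SimpleGraph V) (a₁ a₂ : V) (r : ℕ) :
    SimpleGraph (pexplVerts G a₁ a₂ r) :=
  SimpleGraph.induce (pexplVerts G a₁ a₂ r) (expl G a₁ a₂ r)

/-- `{v,w}` is an `r`-local 2-separator: `v,w` have distance at most `r/2` and the
punctured explorer-neighbourhood is disconnected. -/
def IsLocalTwoSep (G : SimpleGraph V) (r : ℕ) (v w : V) : Prop :=
  v ≠ w ∧ G.Reachable v w ∧ 2 * G.dist v w ≤ r ∧ ¬ (pexpl G v w r).Connected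

/-- The pair `(p,q)` of vertices of `Expl(b₁,b₂)` crosses the local 2-separator `{b₁,b₂}`:
they lie in different components of the punctured explorer-neighbourhood and there is a cycle
of length at most `r` through them containing a copy of `b₁` or `b₂`. -/
def CrossesPair (G : SimpleGraph V) (r : ℕ) (b₁ b₂ : V) (p q : EVert V) : Prop :=
  ∃ (hp : p ∈ pexplVerts G b₁ b₂ r) (hq : q ∈ pexplVerts G b₁ b₂ r),
    ¬ (pexpl G b₁ b₂ r).Reachable ⟨p, hp⟩ ⟨q, hq⟩ ∧
    ∃ (u : EVert V) (c : (expl G b₁ b₂ r).Walk u u), c.IsCycle ∧ c.length ≤ r ∧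
      p ∈ c.support ∧ q ∈ c.support ∧ ∃ z ∈ c.support, z.1 = b₁ ∨ z.1 = b₂

/-- `{a₁,a₂}` crosses `{b₁,b₂}`: some copies of `a₁`, `a₂` cross `{b₁,b₂}`. -/
def Crosses (G : SimpleGraph V) (r : ℕ) (a₁ a₂ b₁ b₂ : V) : Prop :=
  ∃ p q : EVert V, p.1 = a₁ ∧ q.1 = a₂ ∧ CrossesPair G r b₁ b₂ p q

/-- Some copy of `x` lies in the same component of `Expl(v,w) - v - w` as some copy of `y`. -/
def CopyReach (G : SimpleGraph V) (r : ℕ) (v w x y : V) : Prop :=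
  ∃ (p q : EVert V) (hp : p ∈ pexplVerts G v w r) (hq : q ∈ pexplVerts G v w r),
    p.1 = x ∧ q.1 = y ∧ (pexpl G v w r).Reachable ⟨p, hp⟩ ⟨q, hq⟩

/-- A cycle through `a₁` alternating between `{a₁,a₂}` and `{b₁,b₂}`: the four vertices are
distinct and `b₁`, `b₂` lie on different arcs of the cycle between `a₁` and `a₂`. -/
def AltCycle (G : SimpleGraph V) (a₁ a₂ b₁ b₂ : V) (c : G.Walk a₁ a₁) : Prop :=
  c.IsCycle ∧ b₁ ≠ b₂ ∧ b₁ ∉ ({a₁, a₂} : Set V) ∧ b₂ ∉ ({a₁, a₂} : Set V) ∧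
  ∃ (p : G.Walk a₁ a₂) (q : G.Walk a₂ a₁), c = p.append q ∧
    ((b₁ ∈ p.support ∧ b₂ ∈ q.support) ∨ (b₂ ∈ p.support ∧ b₁ ∈ q.support))

/-- `S` is generated over `𝔽₂` by members of `C` (sum = symmetric difference). -/
def GeneratedBy {α : Type*} (C : Set (Set (Sym2 α))) (S : Set (Sym2 α)) : Prop :=
  ∃ l : List (Set (Sym2 α)), (∀ A ∈ l, A ∈ C) ∧ l.foldr symmDiff ∅ = S

/-- The edge set of a walk. -/
def walkEdgeSet {α : Type*} {H : SimpleGraph α} {x y : α} (c : H.Walk x y) : Set (Sym2 α) :=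
  {e | e ∈ c.edges}


end LocalSep

section Aux

open SimpleGraph Walk List
open scoped symmDiff

variable {α : Type*} [DecidableEq α] {H : SimpleGraph α}

/-- The set of edges appearing an odd number of times in a walk. -/
def chi {x y : α} (p : H.Walk x y) : Set (Sym2 α) := {e | Odd (p.edges.count e)}

lemma chi_nil {x : α} : chi (Walk.nil : H.Walk x x) = ∅ := by
  ext e; simp [chi]

lemma chi_length_zero {x y : α} (p : H.Walk x y) (hp : p.length = 0) : chi p = ∅ := by
  have : p.edges = [] := List.length_eq_zero_iff.mp (by simp [hp])
  ext e; simp [chi, this]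

lemma chi_cons {x b y : α} (h : H.Adj x b) (p : H.Walk b y) :
    chi (Walk.cons h p) = ({s(x, b)} : Set (Sym2 α)) ∆ chi p := by
  ext e
  by_cases he : e = s(x, b)
  · subst he
    simp only [chi, Set.mem_setOf_eq, Walk.edges_cons, List.count_cons_self, Set.mem_symmDiff,
      Set.mem_singleton_iff, Nat.odd_add_one, Nat.not_even_iff_odd]
    tauto
  · simp only [chi, Set.mem_setOf_eq, Walk.edges_cons,
      List.count_cons_of_ne (Ne.symm he), Set.mem_symmDiff, Set.mem_singleton_iff]
    tauto

lemma chi_append {x y z : α} (p : H.Walk x y) (q : H.Walk y z) :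
    chi (p.append q) = chi p ∆ chi q := by
  ext e
  simp only [chi, Set.mem_setOf_eq, Walk.edges_append, List.count_append, Set.mem_symmDiff,
    Nat.odd_add, ← Nat.not_odd_iff_even]
  tauto

lemma chi_reverse {x y : α} (p : H.Walk x y) : chi p.reverse = chi p := by
  ext e; simp [chi, Walk.edges_reverse, List.count_reverse]

lemma chi_trail {x y : α} {p : H.Walk x y} (hp : p.IsTrail) : chi p = {e | e ∈ p.edges} := by
  ext e
  simp only [chi, Set.mem_setOf_eq]
  constructor
  · intro he
    by_contra hne
    rw [List.count_eq_zero_of_not_mem hne] at he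
    simp at he
  · intro he
    rw [List.count_eq_one_of_mem hp.edges_nodup he]
    simp

instance : Std.Associative (α := Set (Sym2 α)) symmDiff := ⟨symmDiff_assoc⟩
instance : Std.Commutative (α := Set (Sym2 α)) symmDiff := ⟨symmDiff_comm⟩

lemma foldr_symmDiff_append (l₁ l₂ : List (Set (Sym2 α))) :
    (l₁ ++ l₂).foldr symmDiff ∅ = (l₁.foldr symmDiff ∅) ∆ (l₂.foldr symmDiff ∅) := by
  induction l₁ with
  | nil => simp; ext e; simp [Set.mem_symmDiff]
  | cons A l ih =>
      simp only [List.cons_append, List.foldr_cons, ih]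
      rw [symmDiff_assoc]

lemma gen_foldr {C : Set (Set (Sym2 α))} :
    ∀ l : List (Set (Sym2 α)), (∀ A ∈ l, LocalSep.GeneratedBy C A) →
      LocalSep.GeneratedBy C (l.foldr symmDiff ∅) := by
  intro l
  induction l with
  | nil => intro _; exact ⟨[], by simp, rfl⟩
  | cons A l ih =>
      intro h
      obtain ⟨lA, hlA, hA⟩ := h A (by simp)
      obtain ⟨lr, hlr, hr⟩ := ih (fun B hB => h B (by simp [hB]))
      refine ⟨lA ++ lr, ?_, ?_⟩
      · intro B hB
        rcases List.mem_append.mp hB with h' | h'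
        exacts [hlA B h', hlr B h']
      · rw [foldr_symmDiff_append, hA, hr]; rfl

lemma gen_trans {C D : Set (Set (Sym2 α))} {S : Set (Sym2 α)}
    (hd : LocalSep.GeneratedBy D S) (h : ∀ T ∈ D, LocalSep.GeneratedBy C T) :
    LocalSep.GeneratedBy C S := by
  obtain ⟨l, hl, hfold⟩ := hd
  rw [← hfold]
  exact gen_foldr l (fun A hA => h A (hl A hA))

/-- A path from `u` to `u` is trivial. -/
lemma path_loop_nil {u : α} {q : H.Walk u u} (hq : q.IsPath) : q.length = 0 := by
  cases q with
  | nil => rfl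
  | cons h q' =>
      exfalso
      rw [Walk.cons_isPath_iff] at hq
      exact hq.2 q'.end_mem_support

/-- Splitting a closed walk that is neither trivial nor a cycle. -/
lemma exists_split {u : α} (W : H.Walk u u) (hne : W.length ≠ 0) (hnc : ¬ W.IsCycle) :
    chi W = ∅ ∨
    ∃ (w z : α) (A : H.Walk w w) (B : H.Walk z z),
      0 < A.length ∧ 0 < B.length ∧ A.length + B.length = W.length ∧
      chi W = chi A ∆ chi B := by
  cases W with
  | nil => simp at hne
  | @cons _ b _ h p =>
    by_cases hnd : p.support.Nodup
    · -- p is a path; failure of cycle means the edge s(u,b) already occurs in p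
      left
      have hp : p.IsPath := (Walk.isPath_def p).mpr hnd
      have hmem : s(u, b) ∈ p.edges := by
        by_contra hmem
        exact hnc ((Walk.cons_isCycle_iff p h).mpr ⟨hp, hmem⟩)
      -- then p must be the single edge b-u
      have hpe : p.edges = [s(b, u)] := by
        cases p with
        | nil => simp at hmem
        | @cons _ c _ h' q =>
            rw [Walk.edges_cons, List.mem_cons] at hmem
            rcases hmem with he | he
            · have hcu : c = u := by
                rw [Sym2.eq_iff] at he
                rcases he with ⟨h1, h2⟩ | ⟨h1, h2⟩
                · exact absurd h1 h.ne
                · exact h1.symm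
              subst hcu
              have : q.length = 0 :=
                path_loop_nil ((Walk.cons_isPath_iff h' q).mp hp).1
              have hqe : q.edges = [] := List.length_eq_zero_iff.mp (by simp [this])
              simp [hqe]
            · exfalso
              have : b ∈ q.support := Walk.snd_mem_support_of_mem_edges q he
              exact ((Walk.cons_isPath_iff h' q).mp hp).2 this
      have : (Walk.cons h p).edges = [s(u, b), s(b, u)] := by
        rw [Walk.edges_cons, hpe]
      ext e
      simp only [chi, Set.mem_setOf_eq, this, Set.mem_empty_iff_false, iff_false]
      intro hodd
      have hswap : s(b, u) = s(u, b) := Sym2.eq_swap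
      rw [hswap] at hodd
      by_cases he : e = s(u, b)
      · subst he; simp [List.count_cons, Nat.odd_iff] at hodd
      · rw [List.count_eq_zero_of_not_mem (by simp [he])] at hodd
        simp at hodd
    · -- some vertex z is repeated in p.support
      right
      obtain ⟨z, hz2⟩ : ∃ z, 2 ≤ p.support.count z := by
        by_contra hc
        push_neg at hc
        exact hnd (List.nodup_iff_count_le_one.mpr (fun a => by have := hc a; omega))
      have hz : z ∈ p.support := List.count_pos_iff.mp (by omega)
      set P₁ := p.takeUntil z hz with hP₁
      set D := p.dropUntil z hz with hD
      have hspec : P₁.append D = p := p.take_spec hz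
      have hcount1 : P₁.support.count z = 1 := p.count_support_takeUntil_eq_one hz
      have hztail : z ∈ D.support.tail := by
        have : p.support.count z = P₁.support.count z + D.support.tail.count z := by
          rw [← hspec, Walk.support_append, List.count_append]
        rw [hcount1] at this
        have : 1 ≤ D.support.tail.count z := by omega
        exact List.count_pos_iff.mp (by omega)
      cases hDc : D with
      | nil => rw [hDc] at hztail; simp at hztail
      | @cons _ c _ h₂ q =>
        have hzq : z ∈ q.support := by
          rw [hDc] at hztail; simpa using hztail
        set qT := q.takeUntil z hzq with hqT
        set R := q.dropUntil z hzq with hR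
        have hqspec : qT.append R = q := q.take_spec hzq
        refine ⟨z, u, Walk.cons h₂ qT, Walk.cons h (P₁.append R), by simp, by simp, ?_, ?_⟩
        · have h1 : p.length = P₁.length + D.length := by
            rw [← hspec, Walk.length_append]
          have h2 : q.length = qT.length + R.length := by
            rw [← hqspec, Walk.length_append]
          have h3 : D.length = q.length + 1 := by rw [hDc]; simp
          simp only [Walk.length_cons, Walk.length_append]
          omega
        · have hchip : chi p = chi P₁ ∆ (({s(z, c)} : Set (Sym2 α)) ∆ (chi qT ∆ chi R)) := by
            rw [← hspec, chi_append, hDc, chi_cons, ← hqspec, chi_append]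
          rw [chi_cons, hchip, chi_cons, chi_cons, chi_append]
          ac_rfl

/-- Every closed walk's parity edge set is generated by edge sets of cycles of
bounded length. -/
lemma chi_generated :
    ∀ (m : ℕ) {u : α} (W : H.Walk u u), W.length ≤ m →
      LocalSep.GeneratedBy
        {T | ∃ (w : α) (c : H.Walk w w), c.IsCycle ∧ c.length ≤ m ∧ T = LocalSep.walkEdgeSet c}
        (chi W) := by
  intro m
  induction m with
  | zero =>
      intro u W hW
      have : chi W = ∅ := chi_length_zero W (by omega)
      exact ⟨[], by simp, by simp [this]⟩
  | succ m ih =>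
      intro u W hW
      by_cases h0 : W.length = 0
      · exact ⟨[], by simp, by simp [chi_length_zero W h0]⟩
      by_cases hc : W.IsCycle
      · refine ⟨[chi W], ?_, ?_⟩
        · intro A hA
          simp only [List.mem_singleton] at hA
          subst hA
          exact ⟨u, W, hc, hW, by rw [chi_trail hc.isTrail]; rfl⟩
        · simp only [List.foldr_cons, List.foldr_nil]
          ext e; simp [symmDiff, Set.mem_union, Set.mem_diff]
      · rcases exists_split W h0 hc with hempty | ⟨w, z, A, B, hA1, hB1, hsum, hchi⟩
        · exact ⟨[], by simp, by simp [hempty]⟩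
        · have hAm : A.length ≤ m := by omega
          have hBm : B.length ≤ m := by omega
          have weaken : ∀ T, T ∈ {T | ∃ (w : α) (c : H.Walk w w), c.IsCycle ∧ c.length ≤ m ∧
              T = LocalSep.walkEdgeSet c} →
              T ∈ {T | ∃ (w : α) (c : H.Walk w w), c.IsCycle ∧ c.length ≤ m + 1 ∧
              T = LocalSep.walkEdgeSet c} := by
            rintro T ⟨w', c, hc1, hc2, hc3⟩
            exact ⟨w', c, hc1, by omega, hc3⟩
          obtain ⟨lA, hlA, hfA⟩ := ih A hAm
          obtain ⟨lB, hlB, hfB⟩ := ih B hBm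
          refine ⟨lA ++ lB, ?_, ?_⟩
          · intro T hT
            rcases List.mem_append.mp hT with h' | h'
            · exact weaken T (hlA T h')
            · exact weaken T (hlB T h')
          · rw [foldr_symmDiff_append, hfA, hfB, hchi]

end Aux


namespace LocalSep

open scoped symmDiff

/-- Every element of the cycle space (eulerian subgraph) of the ball `B_{r/2}(v)` is a sum
over `𝔽₂` of edge sets of cycles of length at most `r` contained in `B_{r/2}(v)`. -/
theorem stmt3 {V : Type u} (G : SimpleGraph V) (v : V) (r : ℕ)
    (S : Set (Sym2 (ball G v r).verts))
    (hS : GeneratedBy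
      {T | ∃ (w : (ball G v r).verts) (d : (ball G v r).coe.Walk w w),
        d.IsCycle ∧ T = walkEdgeSet d} S) :
    GeneratedBy
      {T | ∃ (w : (ball G v r).verts) (d : (ball G v r).coe.Walk w w),
        d.IsCycle ∧ d.length ≤ r ∧ T = walkEdgeSet d} S := by
  classical
  set B := ball G v r with hB
  have hv : v ∈ B.verts := show v ∈ ballVerts G v r from ⟨Reachable.refl v, by rw [SimpleGraph.dist_self]; omega⟩
  -- any edge of the ball yields a bound on the distances of its endpoints
  have edge_bound : ∀ a b : B.verts, B.coe.Adj a b →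
      G.dist v a.1 + G.dist v b.1 + 1 ≤ r := by
    intro a b hab
    have h' : B.Adj a.1 b.1 := (Subgraph.coe_adj B a b).mp hab
    obtain ⟨hadj, ha, hb', hpar⟩ := (show (ball G v r).Adj a.1 b.1 from h')
    have hda : G.dist v a.1 ≤ r / 2 := ha.2
    have hdb : G.dist v b.1 ≤ r / 2 := hb'.2
    rcases Nat.even_or_odd r with he | ho
    · have hne := hpar he
      have hr2 : r % 2 = 0 := Nat.even_iff.mp he
      rcases Decidable.not_and_iff_or_not.mp hne with h1 | h1 <;> omega
    · have hr2 : r % 2 = 1 := Nat.odd_iff.mp ho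
      omega
  -- geodesics from `v` stay inside the ball
  have geo_ex : ∀ (d : ℕ) (x : V) (hx : x ∈ B.verts), G.dist v x = d →
      ∃ g : B.coe.Walk ⟨v, hv⟩ ⟨x, hx⟩, g.length = d := by
    intro d
    induction d with
    | zero =>
        intro x hx hdx
        have hxv : v = x := ((show x ∈ ballVerts G v r from hx).1.dist_eq_zero_iff).mp hdx
        subst hxv
        exact ⟨Walk.nil, rfl⟩
    | succ d ih =>
        intro x hx hdx
        obtain ⟨p, hp⟩ := (show x ∈ ballVerts G v r from hx).1.exists_walk_length_eq_dist
        rw [hdx] at hp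
        cases hrev : p.reverse with
        | nil =>
            exfalso
            have : p.reverse.length = d + 1 := by rw [Walk.length_reverse, hp]
            rw [hrev] at this
            simp at this
        | @cons _ y _ hxy q =>
            have hql : q.length = d := by
              have : p.reverse.length = d + 1 := by rw [Walk.length_reverse, hp]
              rw [hrev] at this
              simpa using this
            have hreachy : G.Reachable v y := ⟨q.reverse⟩
            have hdy_le : G.dist v y ≤ d := by
              have := G.dist_le q.reverse
              rwa [Walk.length_reverse, hql] at this
            have hdy : G.dist v y = d := by
              obtain ⟨w, hw⟩ := hreachy.exists_walk_length_eq_dist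
              have hle : G.dist v x ≤ (w.concat hxy.symm).length := G.dist_le _
              rw [Walk.length_concat, hw] at hle
              omega
            have hy : y ∈ B.verts := show y ∈ ballVerts G v r from ⟨hreachy, by
              have h1 : G.dist v x ≤ r / 2 := (show x ∈ ballVerts G v r from hx).2
              omega⟩
            obtain ⟨g, hg⟩ := ih y hy hdy
            have hadj : B.coe.Adj ⟨y, hy⟩ ⟨x, hx⟩ := by
              rw [Subgraph.coe_adj]
              refine (show (ball G v r).Adj y x from ⟨hxy.symm, hy, hx, fun heven hc => ?_⟩)
              obtain ⟨h1, h2⟩ := hc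
              have h1' : G.dist v y = r / 2 := h1
              have h2' : G.dist v x = r / 2 := h2
              omega
            exact ⟨g.concat hadj, by rw [Walk.length_concat, hg]⟩
  choose gg hgg using fun x : B.verts => geo_ex (G.dist v x.1) x.1 x.2 rfl
  -- the fan decomposition along a walk
  have fan : ∀ {x y : B.verts} (p : B.coe.Walk x y),
      ∃ l : List (Set (Sym2 B.verts)),
        (∀ A ∈ l, ∃ (z : B.verts) (Wc : B.coe.Walk z z), Wc.length ≤ r ∧ A = chi Wc) ∧
        l.foldr symmDiff ∅ = chi p ∆ (chi (gg x) ∆ chi (gg y)) := by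
    intro x y p
    induction p with
    | nil =>
        refine ⟨[], by simp, ?_⟩
        rw [chi_nil, symmDiff_self, symmDiff_bot]
        rfl
    | @cons x b y h q ih =>
        obtain ⟨l, hl, hfold⟩ := ih
        refine ⟨chi ((gg x).append (Walk.cons h (gg b).reverse)) :: l, ?_, ?_⟩
        · rintro A hA
          rcases List.mem_cons.mp hA with rfl | hA
          · refine ⟨⟨v, hv⟩, (gg x).append (Walk.cons h (gg b).reverse), ?_, rfl⟩
            have hb := edge_bound x b h
            rw [Walk.length_append, Walk.length_cons, Walk.length_reverse, hgg x, hgg b]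
            omega
          · exact hl A hA
        · simp only [List.foldr_cons, hfold]
          rw [chi_append, chi_cons, chi_reverse, chi_cons]
          have key : ∀ a b' c d e : Set (Sym2 B.verts),
              (a ∆ (b' ∆ c)) ∆ (d ∆ (c ∆ e)) = (b' ∆ d) ∆ (a ∆ e) := by
            intro a b' c d e
            have h1 : (a ∆ (b' ∆ c)) ∆ (d ∆ (c ∆ e)) = (c ∆ c) ∆ ((b' ∆ d) ∆ (a ∆ e)) := by
              ac_rfl
            rw [h1, symmDiff_self, bot_symmDiff]
          exact key _ _ _ _ _
  -- each generator cycle is generated by short cycles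
  have main : ∀ T ∈ {T | ∃ (w : B.verts) (d : B.coe.Walk w w),
      d.IsCycle ∧ T = walkEdgeSet d},
      GeneratedBy {T | ∃ (w : B.verts) (d : B.coe.Walk w w),
        d.IsCycle ∧ d.length ≤ r ∧ T = walkEdgeSet d} T := by
    rintro T ⟨w, d, hd, rfl⟩
    obtain ⟨l, hl, hfold⟩ := fan d
    have hfold' : l.foldr symmDiff ∅ = chi d := by
      rw [hfold, symmDiff_self, symmDiff_bot]
    have hgen1 : GeneratedBy {T | ∃ (z : B.verts) (Wc : B.coe.Walk z z),
        Wc.length ≤ r ∧ T = chi Wc} (chi d) :=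
      ⟨l, fun A hA => hl A hA, hfold'⟩
    have heq : walkEdgeSet d = chi d := (chi_trail hd.isTrail).symm
    rw [heq]
    refine gen_trans hgen1 ?_
    rintro T ⟨z, Wc, hlen, rfl⟩
    exact chi_generated r Wc hlen
  exact gen_trans hS main

end LocalSep
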